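/- For every binary sequence s of length n, the parallel duplication distance to the root satisfies f'(s) ≥ log₂ n − 2; moreover f'(n) < 2·log₂ n for all n ≥ 2, where f'(n) is the maximum of f'(s) over binary sequences s of length n. -/

import Mathlib

/-- A tandem duplication: `x = a ++ b ++ c` becomes `y = a ++ b ++ b ++ c` with `b` nonempty. -/
def Dup (x y : List Bool) : Prop :=
  ∃ a b c : List Bool, b ≠ [] ∧ x = a ++ b ++ c ∧ y = a ++ (b ++ b) ++ c

/-- `DupSteps k x y` : `y` is obtained from `x` by exactly `k` tandem duplications. -/
def DupSteps : ℕ → List Bool → List Bool → Prop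
  | 0 => fun x y => x = y
  | k + 1 => fun x y => ∃ z, Dup x z ∧ DupSteps k z y

/-- A binary sequence is square-free if it contains no nonempty factor of the form `b ++ b`. -/
def SqFree (s : List Bool) : Prop :=
  ¬ ∃ a b c : List Bool, b ≠ [] ∧ s = a ++ (b ++ b) ++ c

/-- Duplication distance from `s` to its (square-free) root. -/
noncomputable def ddist (s : List Bool) : ℕ :=
  sInf {k | ∃ r : List Bool, SqFree r ∧ DupSteps k r s}

/-- `fmax n` : maximum duplication distance to the root over binary sequences of length `n`. -/
noncomputable def fmax (n : ℕ) : ℕ :=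
  sSup (ddist '' {s : List Bool | s.length = n})

/-- One parallel deduplication step: simultaneously deduplicate a set of pairwise
non-overlapping repeats (listed left to right). -/
inductive ParDedup : List Bool → List Bool → Prop
  | single (a b c : List Bool) (hb : b ≠ []) : ParDedup (a ++ (b ++ b) ++ c) (a ++ b ++ c)
  | cons (a b : List Bool) (hb : b ≠ []) {x y : List Bool} (h : ParDedup x y) :
      ParDedup (a ++ (b ++ b) ++ x) (a ++ b ++ y)

/-- `ParSteps k x y` : `y` is obtained from `x` by exactly `k` parallel deduplication steps. -/
def ParSteps : ℕ → List Bool → List Bool → Prop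
  | 0 => fun x y => x = y
  | k + 1 => fun x y => ∃ z, ParDedup x z ∧ ParSteps k z y

/-- Parallel duplication distance of `s` to its square-free root. -/
noncomputable def pdist (s : List Bool) : ℕ :=
  sInf {k | ∃ r : List Bool, SqFree r ∧ ParSteps k s r}

/-- Maximum parallel duplication distance over binary sequences of length `n`. -/
noncomputable def pfmax (n : ℕ) : ℕ :=
  sSup (pdist '' {s : List Bool | s.length = n})

/-! ### Basic facts -/

lemma parDedup_prepend {x y : List Bool} (p : List Bool) (h : ParDedup x y) :
    ParDedup (p ++ x) (p ++ y) := by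
  cases h with
  | single a b c hb =>
      have := ParDedup.single (p ++ a) b c hb
      simpa [List.append_assoc] using this
  | cons a b hb h =>
      have := ParDedup.cons (p ++ a) b hb h
      simpa [List.append_assoc] using this

lemma parDedup_length_le {x y : List Bool} (h : ParDedup x y) : x.length ≤ 2 * y.length := by
  induction h with
  | single a b c hb => simp; omega
  | cons a b hb h ih => simp_all; omega

lemma parSteps_trans {k l : ℕ} {x y z : List Bool} (h1 : ParSteps k x y)
    (h2 : ParSteps l y z) : ParSteps (k + l) x z := by
  induction k generalizing x with
  | zero =>
      rw [show 0 + l = l by omega]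
      exact (show x = y from h1) ▸ h2
  | succ k ih =>
      obtain ⟨w, hw, hsteps⟩ := h1
      rw [show k + 1 + l = (k + l) + 1 by omega]
      exact ⟨w, hw, ih hsteps⟩

lemma parSteps_length_le {k : ℕ} {x y : List Bool} (h : ParSteps k x y) :
    x.length ≤ 2 ^ k * y.length := by
  induction k generalizing x with
  | zero => rw [show x = y from h]; simp
  | succ k ih =>
      obtain ⟨z, hz, hsteps⟩ := h
      have h1 := parDedup_length_le hz
      have h2 := ih hsteps
      calc x.length ≤ 2 * z.length := h1
        _ ≤ 2 * (2 ^ k * y.length) := by omega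
        _ = 2 ^ (k + 1) * y.length := by ring

lemma sqFree_length_le {s : List Bool} (h : SqFree s) : s.length ≤ 3 := by
  by_contra h4
  push_neg at h4
  obtain ⟨p, s, rfl⟩ : ∃ p s', s = p :: s' := by
    cases s with | nil => simp at h4 | cons a t => exact ⟨a, t, rfl⟩
  obtain ⟨q, s, rfl⟩ : ∃ q s', s = q :: s' := by
    cases s with | nil => simp at h4 | cons a t => exact ⟨a, t, rfl⟩
  obtain ⟨u, s, rfl⟩ : ∃ u s', s = u :: s' := by
    cases s with | nil => simp at h4 | cons a t => exact ⟨a, t, rfl⟩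
  obtain ⟨v, s, rfl⟩ : ∃ v s', s = v :: s' := by
    cases s with | nil => simp at h4 | cons a t => exact ⟨a, t, rfl⟩
  apply h
  by_cases h1 : p = q
  · exact ⟨[], [p], u :: v :: s, by simp, by simp [h1]⟩
  by_cases h2 : q = u
  · exact ⟨[p], [q], v :: s, by simp, by simp [h2]⟩
  by_cases h3 : u = v
  · exact ⟨[p, q], [u], s, by simp, by simp [h3]⟩
  · have hu : u = p := by revert h1 h2; cases p <;> cases q <;> cases u <;> simp
    have hv : v = q := by revert h2 h3; cases q <;> cases u <;> cases v <;> simp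
    exact ⟨[], [p, q], s, by simp, by simp [hu, hv]⟩

lemma sqFree_of_chain'_short {s : List Bool} (hc : List.Chain' Ne s) (hl : s.length ≤ 3) :
    SqFree s := by
  rintro ⟨a, b, c, hb, rfl⟩
  simp only [List.length_append] at hl
  have hb1 : b.length = 1 := by
    have : 1 ≤ b.length := List.length_pos_iff.mpr hb
    omega
  obtain ⟨x, rfl⟩ : ∃ x, b = [x] := by
    cases b with
    | nil => simp at hb1
    | cons y t => cases t with
      | nil => exact ⟨y, rfl⟩
      | cons z t => simp at hb1
  have hinf : [x, x] <:+: a ++ ([x] ++ [x]) ++ c := ⟨a, c, by simp⟩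
  have := List.IsChain.infix hc hinf
  simp [List.isChain_cons_cons] at this

/-! ### Run-length encodings -/

def dec (e : List (Bool × ℕ)) : List Bool :=
  (e.map fun p => List.replicate p.2 p.1).flatten

def runs : List Bool → List (Bool × ℕ)
  | [] => []
  | a :: s =>
    match runs s with
    | [] => [(a, 1)]
    | (b, k) :: rest => if a = b then (a, k + 1) :: rest else (a, 1) :: (b, k) :: rest

def sumE (e : List (Bool × ℕ)) : ℕ := (e.map Prod.snd).sum
def maxE (e : List (Bool × ℕ)) : ℕ := (e.map Prod.snd).foldr max 0
def halve (e : List (Bool × ℕ)) : List (Bool × ℕ) := e.map fun p => (p.1, (p.2 + 1) / 2)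
def ones (e : List (Bool × ℕ)) : List (Bool × ℕ) := e.map fun p => (p.1, 1)

def AltC : Bool → List (Bool × ℕ) → Prop
  | _, [] => True
  | b, p :: rest => p.1 = b ∧ AltC (!b) rest

@[simp] lemma dec_nil : dec [] = [] := rfl
@[simp] lemma dec_cons (p : Bool × ℕ) (e : List (Bool × ℕ)) :
    dec (p :: e) = List.replicate p.2 p.1 ++ dec e := by simp [dec]
@[simp] lemma halve_nil : halve [] = [] := rfl
@[simp] lemma halve_cons (p : Bool × ℕ) (e : List (Bool × ℕ)) :
    halve (p :: e) = (p.1, (p.2 + 1) / 2) :: halve e := rfl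
@[simp] lemma ones_nil : ones [] = [] := rfl
@[simp] lemma ones_cons (p : Bool × ℕ) (e : List (Bool × ℕ)) :
    ones (p :: e) = (p.1, 1) :: ones e := rfl
@[simp] lemma altC_nil (b : Bool) : AltC b [] := trivial
@[simp] lemma altC_cons (b : Bool) (p : Bool × ℕ) (e : List (Bool × ℕ)) :
    AltC b (p :: e) ↔ p.1 = b ∧ AltC (!b) e := Iff.rfl

lemma runs_cons_nil {s : List Bool} (a : Bool) (h : runs s = []) :
    runs (a :: s) = [(a, 1)] := by
  simp [runs, h]

lemma runs_cons_eq {s : List Bool} {b : Bool} {k : ℕ} {rest : List (Bool × ℕ)} (a : Bool)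
    (h : runs s = (b, k) :: rest) (hab : a = b) : runs (a :: s) = (a, k + 1) :: rest := by
  simp [runs, h, hab]

lemma runs_cons_ne {s : List Bool} {b : Bool} {k : ℕ} {rest : List (Bool × ℕ)} (a : Bool)
    (h : runs s = (b, k) :: rest) (hab : a ≠ b) :
    runs (a :: s) = (a, 1) :: (b, k) :: rest := by
  simp [runs, h, hab]

lemma dec_length (e : List (Bool × ℕ)) : (dec e).length = sumE e := by
  induction e with
  | nil => rfl
  | cons p e ih => simp [sumE] at *; omega

lemma dec_runs (s : List Bool) : dec (runs s) = s := by
  induction s with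
  | nil => rfl
  | cons a s ih =>
    rcases h : runs s with _ | ⟨⟨b, k⟩, rest⟩
    · rw [h] at ih
      simp at ih
      rw [runs_cons_nil a h]
      simp [ih]
    · rw [h] at ih
      by_cases hab : a = b
      · rw [runs_cons_eq a h hab]
        subst hab
        simp [List.replicate_succ]
        simpa using ih
      · rw [runs_cons_ne a h hab]
        simpa using ih

lemma runs_pos (s : List Bool) : ∀ p ∈ runs s, 1 ≤ p.2 := by
  induction s with
  | nil => intro p hp; simp [runs] at hp
  | cons a s ih =>
    intro p hp
    rcases h : runs s with _ | ⟨⟨b, k⟩, rest⟩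
    · rw [runs_cons_nil a h] at hp
      simp at hp
      simp [hp]
    · rw [h] at ih
      by_cases hab : a = b
      · rw [runs_cons_eq a h hab] at hp
        rcases List.mem_cons.mp hp with rfl | hp
        · simp
        · exact ih p (List.mem_cons_of_mem _ hp)
      · rw [runs_cons_ne a h hab] at hp
        rcases List.mem_cons.mp hp with rfl | hp
        · simp
        · exact ih p hp

lemma runs_head (s : List Bool) : (runs s).head?.map Prod.fst = s.head? := by
  induction s with
  | nil => simp [runs]
  | cons a s ih =>
    rcases h : runs s with _ | ⟨⟨b, k⟩, rest⟩
    · rw [runs_cons_nil a h]; simp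
    · by_cases hab : a = b
      · rw [runs_cons_eq a h hab]; simp
      · rw [runs_cons_ne a h hab]; simp

lemma runs_altC (s : List Bool) : ∀ b, s.head? = some b → AltC b (runs s) := by
  induction s with
  | nil => simp
  | cons a s ih =>
    intro b hb
    simp at hb
    subst hb
    rcases h : runs s with _ | ⟨⟨b, k⟩, rest⟩
    · rw [runs_cons_nil a h]; simp
    · have hhead : s.head? = some b := by
        have := runs_head s
        rw [h] at this
        simpa using this.symm
      have halt := ih b hhead
      rw [h] at halt
      by_cases hab : a = b
      · rw [runs_cons_eq a h hab]
        subst hab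
        exact ⟨rfl, halt.2⟩
      · rw [runs_cons_ne a h hab]
        have hba : b = !a := by revert hab; cases a <;> cases b <;> simp
        refine ⟨rfl, ?_⟩
        rw [← hba]
        exact halt

lemma maxE_le (e : List (Bool × ℕ)) : ∀ p ∈ e, p.2 ≤ maxE e := by
  induction e with
  | nil => simp
  | cons q e ih =>
    intro p hp
    rcases List.mem_cons.mp hp with rfl | hp
    · simp [maxE]
    · have := ih p hp
      simp [maxE] at *
      omega

lemma length_le_sumE (e : List (Bool × ℕ)) (hpos : ∀ p ∈ e, 1 ≤ p.2) :
    e.length ≤ sumE e := by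
  induction e with
  | nil => simp [sumE]
  | cons q e ih =>
    have hq1 := hpos q (by simp)
    have := ih (fun r hr => hpos r (by simp [hr]))
    simp [sumE] at *
    omega

lemma maxE_add_length_le (e : List (Bool × ℕ)) (hpos : ∀ p ∈ e, 1 ≤ p.2) :
    maxE e + e.length ≤ sumE e + 1 := by
  induction e with
  | nil => simp [maxE, sumE]
  | cons p e ih =>
    have h1 : 1 ≤ p.2 := hpos p (by simp)
    have ih' := ih (fun q hq => hpos q (by simp [hq]))
    have hlen : e.length ≤ sumE e := length_le_sumE e (fun q hq => hpos q (by simp [hq]))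
    simp [maxE, sumE] at *
    omega

/-! ### Phase 1 -/

lemma halve_ones (e : List (Bool × ℕ)) : ones (halve e) = ones e := by
  simp [ones, halve]

lemma halve_of_all_one (e : List (Bool × ℕ)) (h : ∀ p ∈ e, p.2 = 1) : halve e = e := by
  induction e with
  | nil => rfl
  | cons p e ih =>
    have h1 : p.2 = 1 := h p (by simp)
    have h2 : (p.2 + 1) / 2 = p.2 := by omega
    simp [h2, ih (fun q hq => h q (by simp [hq]))]

lemma ones_of_all_one (e : List (Bool × ℕ)) (h : ∀ p ∈ e, p.2 = 1) : ones e = e := by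
  induction e with
  | nil => rfl
  | cons p e ih =>
    have h1 : p.2 = 1 := h p (by simp)
    simp [← h1, ih (fun q hq => h q (by simp [hq]))]

lemma step1 (e : List (Bool × ℕ)) (hpos : ∀ p ∈ e, 1 ≤ p.2) (hex : ∃ p ∈ e, 2 ≤ p.2) :
    ParDedup (dec e) (dec (halve e)) := by
  induction e with
  | nil => simp at hex
  | cons p e ih =>
    obtain ⟨b, k⟩ := p
    by_cases hk : 2 ≤ k
    · have hsplit : List.replicate k b
          = List.replicate (k % 2) b ++ (List.replicate (k / 2) b ++ List.replicate (k / 2) b) := by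
        rw [← List.replicate_add, ← List.replicate_add]
        congr 1
        omega
      have hres : List.replicate ((k + 1) / 2) b
          = List.replicate (k % 2) b ++ List.replicate (k / 2) b := by
        rw [← List.replicate_add]
        congr 1
        omega
      have hbne : List.replicate (k / 2) b ≠ [] := by
        apply List.ne_nil_of_length_pos
        simp
        omega
      by_cases hrest : ∃ p ∈ e, 2 ≤ p.2
      · have hIH := ih (fun q hq => hpos q (by simp [hq])) hrest
        have := ParDedup.cons (List.replicate (k % 2) b) (List.replicate (k / 2) b) hbne hIH
        simp only [dec_cons, halve_cons]
        rw [hsplit, hres]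
        simpa [List.append_assoc] using this
      · push_neg at hrest
        have hallone : ∀ p ∈ e, p.2 = 1 := fun q hq => by
          have := hpos q (by simp [hq]); have := hrest q hq; omega
        have heq : halve e = e := halve_of_all_one e hallone
        have := ParDedup.single (List.replicate (k % 2) b) (List.replicate (k / 2) b) (dec e) hbne
        simp only [dec_cons, halve_cons]
        rw [hsplit, hres, heq]
        simpa [List.append_assoc] using this
    · have hk1 : k = 1 := by have := hpos (b, k) (by simp); omega
      subst hk1
      have hrest : ∃ p ∈ e, 2 ≤ p.2 := by
        rcases hex with ⟨q, hq, hq2⟩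
        rcases List.mem_cons.mp hq with rfl | hq
        · simp at hq2
        · exact ⟨q, hq, hq2⟩
      have hIH := ih (fun q hq => hpos q (by simp [hq])) hrest
      have := parDedup_prepend (List.replicate 1 b) hIH
      simpa using this

lemma halve_pos (e : List (Bool × ℕ)) (hpos : ∀ p ∈ e, 1 ≤ p.2) :
    ∀ p ∈ halve e, 1 ≤ p.2 := by
  intro p hp
  simp only [halve, List.mem_map] at hp
  obtain ⟨q, hq, rfl⟩ := hp
  have := hpos q hq
  simp
  omega

lemma halve_bound (e : List (Bool × ℕ)) (K : ℕ) (h : ∀ p ∈ e, p.2 ≤ K) :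
    ∀ p ∈ halve e, p.2 ≤ (K + 1) / 2 := by
  intro p hp
  simp only [halve, List.mem_map] at hp
  obtain ⟨q, hq, rfl⟩ := hp
  have := h q hq
  simp
  omega

/-- Phase 1 iteration: reduce all runs to length 1. -/
lemma phase1 : ∀ K e, (∀ p ∈ e, 1 ≤ p.2) → (∀ p ∈ e, p.2 ≤ K) →
    ∃ t, ParSteps t (dec e) (dec (ones e)) ∧ 2 ^ t ≤ max 1 (2 * (K - 1)) := by
  intro K
  induction K using Nat.strong_induction_on with
  | _ K ihK =>
    intro e hpos hbd
    by_cases hall : ∀ p ∈ e, p.2 ≤ 1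
    · have h1 : ∀ p ∈ e, p.2 = 1 := fun p hp => le_antisymm (hall p hp) (hpos p hp)
      refine ⟨0, ?_, by simp⟩
      rw [ones_of_all_one e h1]
      rfl
    · push_neg at hall
      obtain ⟨q, hq, hq2⟩ := hall
      have hq2' : 2 ≤ q.2 := hq2
      have hK2 : 2 ≤ K := le_trans hq2' (hbd q hq)
      have hstep := step1 e hpos ⟨q, hq, hq2'⟩
      have hlt : (K + 1) / 2 < K := by omega
      obtain ⟨t, hsteps, hbound⟩ := ihK ((K + 1) / 2) hlt (halve e)
        (halve_pos e hpos) (halve_bound e K hbd)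
      rw [halve_ones] at hsteps
      refine ⟨t + 1, ?_, ?_⟩
      · rw [show t + 1 = 1 + t by omega]
        exact parSteps_trans ⟨dec (halve e), hstep, rfl⟩ hsteps
      · have : 2 ^ (t + 1) = 2 * 2 ^ t := by ring
        rw [this]
        have h2 : max 1 (2 * ((K + 1) / 2 - 1)) ≤ K - 1 := by omega
        calc 2 * 2 ^ t ≤ 2 * (K - 1) := by omega
          _ ≤ max 1 (2 * (K - 1)) := le_max_right _ _

/-! ### Phase 2: alternating strings -/

def altL : Bool → ℕ → List Bool
  | _, 0 => []
  | b, m + 1 => b :: altL (!b) m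

@[simp] lemma altL_zero (b : Bool) : altL b 0 = [] := rfl
@[simp] lemma altL_succ (b : Bool) (m : ℕ) : altL b (m + 1) = b :: altL (!b) m := rfl

@[simp] lemma altL_length (b : Bool) (m : ℕ) : (altL b m).length = m := by
  induction m generalizing b with
  | zero => rfl
  | succ m ih => simp [ih]

lemma altL_chain' (b : Bool) (m : ℕ) : List.Chain' Ne (altL b m) := by
  induction m generalizing b with
  | zero => simp [List.Chain']
  | succ m ih =>
    cases m with
    | zero => simp [List.Chain']
    | succ m' =>
      rw [altL_succ, altL_succ]
      show List.IsChain _ _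
      rw [List.isChain_cons_cons]
      exact ⟨by simp, by rw [← altL_succ]; exact ih (!b)⟩

lemma altL_two_add (b : Bool) (j : ℕ) : altL b (j + 2) = [b, !b] ++ altL b j := by
  simp [Bool.not_not]

lemma altL_four_add (b : Bool) (j : ℕ) : altL b (j + 4) = [b, !b, b, !b] ++ altL b j := by
  simp [Bool.not_not]

lemma dec_ones_altC (e : List (Bool × ℕ)) : ∀ b, AltC b e → dec (ones e) = altL b e.length := by
  induction e with
  | nil => simp
  | cons p e ih =>
    intro b hb
    obtain ⟨h1, h2⟩ := hb
    simp only [ones_cons, dec_cons, List.length_cons, altL_succ]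
    rw [ih (!b) h2]
    simp [h1]

lemma step2 : ∀ m, 4 ≤ m → ∀ b, ParDedup (altL b m) (altL b (m - 2 * (m / 4))) := by
  intro m
  induction m using Nat.strong_induction_on with
  | _ m ihm =>
    intro hm b
    obtain ⟨j, rfl⟩ : ∃ j, m = j + 4 := ⟨m - 4, by omega⟩
    by_cases hj : 4 ≤ j
    · have hIH := ihm j (by omega) hj b
      have := ParDedup.cons [] [b, !b] (by simp) hIH
      rw [altL_four_add]
      have harith : j + 4 - 2 * ((j + 4) / 4) = (j - 2 * (j / 4)) + 2 := by omega
      rw [harith, altL_two_add]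
      simpa using this
    · have := ParDedup.single [] [b, !b] (altL b j) (by simp)
      rw [altL_four_add]
      have harith : j + 4 - 2 * ((j + 4) / 4) = j + 2 := by omega
      rw [harith, altL_two_add]
      simpa using this

lemma phase2 : ∀ m b, ∃ t m', m' ≤ 3 ∧ ParSteps t (altL b m) (altL b m') ∧
    2 ^ t ≤ max 1 (2 * (m - 3)) := by
  intro m
  induction m using Nat.strong_induction_on with
  | _ m ihm =>
    intro b
    by_cases hm : m ≤ 3
    · exact ⟨0, m, hm, rfl, by simp⟩
    · push_neg at hm
      have h4 : 4 ≤ m := hm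
      have hstep := step2 m h4 b
      set m1 := m - 2 * (m / 4) with hm1
      have hlt : m1 < m := by omega
      obtain ⟨t, m', hm', hsteps, hbound⟩ := ihm m1 hlt b
      refine ⟨t + 1, m', hm', ?_, ?_⟩
      · rw [show t + 1 = 1 + t by omega]
        exact parSteps_trans ⟨altL b m1, hstep, rfl⟩ hsteps
      · have : 2 ^ (t + 1) = 2 * 2 ^ t := by ring
        rw [this]
        have h2 : max 1 (2 * (m1 - 3)) ≤ m - 3 := by omega
        calc 2 * 2 ^ t ≤ 2 * (m - 3) := by omega
          _ ≤ max 1 (2 * (m - 3)) := le_max_right _ _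

/-! ### Main construction -/

lemma numeric {K R n : ℕ} (hK : 1 ≤ K) (hR : 1 ≤ R) (hKR : K + R ≤ n + 1) (hn : 2 ≤ n) :
    max 1 (2 * (K - 1)) * max 1 (2 * (R - 3)) < n ^ 2 := by
  have hsq : n ^ 2 = n * n := by ring
  have hmul : 2 * n ≤ n * n := by nlinarith
  rcases Nat.lt_or_ge K 2 with hK2 | hK2
  · have h1 : max 1 (2 * (K - 1)) = 1 := by omega
    rw [h1, one_mul, hsq]
    rcases Nat.lt_or_ge R 4 with hR4 | hR4
    · have h2 : max 1 (2 * (R - 3)) = 1 := by omega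
      rw [h2]; omega
    · have h2 : max 1 (2 * (R - 3)) = 2 * (R - 3) := by omega
      rw [h2]; omega
  · have h1 : max 1 (2 * (K - 1)) = 2 * (K - 1) := by omega
    rw [h1]
    rcases Nat.lt_or_ge R 4 with hR4 | hR4
    · have h2 : max 1 (2 * (R - 3)) = 1 := by omega
      rw [h2, mul_one, hsq]; omega
    · have h2 : max 1 (2 * (R - 3)) = 2 * (R - 3) := by omega
      rw [h2]
      obtain ⟨a, rfl⟩ : ∃ a, K = a + 2 := ⟨K - 2, by omega⟩
      obtain ⟨c, rfl⟩ : ∃ c, R = c + 4 := ⟨R - 4, by omega⟩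
      obtain ⟨d, rfl⟩ : ∃ d, n = a + c + 5 + d := ⟨n - (a + c + 5), by omega⟩
      have e1 : a + 2 - 1 = a + 1 := by omega
      have e2 : c + 4 - 3 = c + 1 := by omega
      rw [e1, e2]
      zify
      nlinarith [sq_nonneg ((a : ℤ) - c)]

lemma main_construct (s : List Bool) : ∃ t r, SqFree r ∧ ParSteps t s r ∧
    (2 ≤ s.length → 2 ^ t < s.length ^ 2) := by
  rcases eq_or_ne s [] with rfl | hs
  · exact ⟨0, [], sqFree_of_chain'_short (by simp [List.Chain']) (by simp), rfl, by simp⟩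
  · obtain ⟨b, s', rfl⟩ : ∃ b s', s = b :: s' := by
      cases s with | nil => simp at hs | cons a t => exact ⟨a, t, rfl⟩
    set s := b :: s' with hsdef
    set e := runs s with hedef
    have hpos : ∀ p ∈ e, 1 ≤ p.2 := runs_pos s
    set K := maxE e with hKdef
    set R := e.length with hRdef
    obtain ⟨t1, hsteps1, hb1⟩ := phase1 K e hpos (maxE_le e)
    have hdec : dec e = s := dec_runs s
    have haltC : AltC b e := runs_altC s b (by simp [hsdef])
    have hones : dec (ones e) = altL b R := dec_ones_altC e b haltC
    obtain ⟨t2, m', hm', hsteps2, hb2⟩ := phase2 R b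
    refine ⟨t1 + t2, altL b m', ?_, ?_, ?_⟩
    · exact sqFree_of_chain'_short (altL_chain' b m') (by simp [hm'])
    · rw [← hdec]
      exact parSteps_trans (hones ▸ hsteps1) hsteps2
    · intro hn2
      have hne : e ≠ [] := by
        intro h
        rw [h] at hdec
        exact hs hdec.symm
      have hK1 : 1 ≤ K := by
        obtain ⟨p, hp⟩ : ∃ p, p ∈ e := List.exists_mem_of_ne_nil e hne
        exact le_trans (hpos p hp) (maxE_le e p hp)
      have hR1 : 1 ≤ R := by
        rw [hRdef]
        exact List.length_pos_iff.mpr hne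
      have hsum : sumE e = s.length := by rw [← dec_length e, hdec]
      have hKR : K + R ≤ s.length + 1 := by
        have := maxE_add_length_le e hpos
        omega
      calc 2 ^ (t1 + t2) = 2 ^ t1 * 2 ^ t2 := by ring
        _ ≤ max 1 (2 * (K - 1)) * max 1 (2 * (R - 3)) := Nat.mul_le_mul hb1 hb2
        _ < s.length ^ 2 := numeric hK1 hR1 hKR hn2

lemma pdist_bounds {s : List Bool} {n : ℕ} (hs : s.length = n) (hn : 2 ≤ n) :
    pdist s ≤ 2 * n ∧ (pdist s : ℝ) < 2 * Real.logb 2 n := by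
  obtain ⟨t, r, hr, hsteps, hbt⟩ := main_construct s
  have h2t : 2 ^ t < n ^ 2 := by rw [← hs]; exact hbt (by omega)
  have hle : pdist s ≤ t := Nat.sInf_le ⟨r, hr, hsteps⟩
  have hp : 2 ^ pdist s < n ^ 2 :=
    lt_of_le_of_lt (Nat.pow_le_pow_right (by norm_num) hle) h2t
  constructor
  · have hn2 : n ^ 2 < 2 ^ (2 * n) := by
      have h1 : n < 2 ^ n := Nat.lt_two_pow_self
      calc n ^ 2 = n * n := by ring
        _ < 2 ^ n * 2 ^ n := by
            apply Nat.mul_lt_mul_of_lt_of_lt h1 h1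
        _ = 2 ^ (2 * n) := by rw [← pow_add]; ring_nf
    have := lt_trans hp hn2
    have := (Nat.pow_lt_pow_iff_right (by norm_num : 1 < 2)).mp this
    omega
  · have hreal : ((2 : ℝ)) ^ pdist s < (n : ℝ) ^ 2 := by exact_mod_cast hp
    have hlog := Real.logb_lt_logb (by norm_num : (1:ℝ) < 2) (by positivity) hreal
    rw [Real.logb_pow, Real.logb_pow] at hlog
    rw [Real.logb_self_eq_one (by norm_num)] at hlog
    simpa using hlog

theorem parallel_duplication_bounds :
    (∀ s : List Bool, s ≠ [] → Real.logb 2 (s.length) - 2 ≤ pdist s) ∧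
    (∀ n : ℕ, 2 ≤ n → (pfmax n : ℝ) < 2 * Real.logb 2 n) := by
  constructor
  · intro s hs
    obtain ⟨t0, r0, hr0, hsteps0, _⟩ := main_construct s
    have hne : {k | ∃ r : List Bool, SqFree r ∧ ParSteps k s r}.Nonempty :=
      ⟨t0, r0, hr0, hsteps0⟩
    obtain ⟨r, hr, hsteps⟩ := Nat.sInf_mem hne
    have hlen : s.length ≤ 2 ^ pdist s * r.length := parSteps_length_le hsteps
    have hr3 : r.length ≤ 3 := sqFree_length_le hr
    have hnle : s.length ≤ 2 ^ (pdist s + 2) := by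
      have h1 : 2 ^ pdist s * r.length ≤ 2 ^ pdist s * 3 := Nat.mul_le_mul_left _ hr3
      have h4 : 2 ^ (pdist s + 2) = 2 ^ pdist s * 4 := by ring
      omega
    have hpos : (0 : ℝ) < s.length := by
      have := List.length_pos_iff.mpr hs
      exact_mod_cast this
    have hcast : (s.length : ℝ) ≤ (2 : ℝ) ^ (pdist s + 2) := by exact_mod_cast hnle
    have hlog := Real.logb_le_logb_of_le (by norm_num : (1:ℝ) < 2) hpos hcast
    rw [Real.logb_pow, Real.logb_self_eq_one (by norm_num)] at hlog
    push_cast at hlog ⊢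
    linarith
  · intro n hn
    have hSne : (pdist '' {s : List Bool | s.length = n}).Nonempty :=
      ⟨pdist (List.replicate n true), List.replicate n true, by simp, rfl⟩
    have hSbdd : BddAbove (pdist '' {s : List Bool | s.length = n}) := by
      refine ⟨2 * n, ?_⟩
      rintro x ⟨s, hs, rfl⟩
      exact (pdist_bounds hs hn).1
    obtain ⟨s, hs, heq⟩ := Nat.sSup_mem hSne hSbdd
    rw [pfmax, ← heq]
    exact (pdist_bounds hs hn).2
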